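/- For every α ≥ 1, there exists a semi-centroid clustering instance equipped with the dual metric loss — determined by a pseudometric d^m on N and a pseudometric d^c on the disjoint union N ⊔ M — in which k divides n and no balanced clustering (one in which every cluster has exactly n/k members) is in the α-core. -/

import Mathlib

open Finset

/-- A pseudometric on a set `X`, valued in `ℝ≥0`. -/
def IsPseudometric {X : Type*} (d : X → X → NNReal) : Prop :=
  (∀ x, d x x = 0) ∧ (∀ x y, d x y = d y x) ∧ (∀ x y z, d x y ≤ d x z + d z y)

/-- A clustering: `k` clusters `(part t, cent t)` whose member sets partition the agents. -/
structure Clustering (N M : Type*) (k : ℕ) where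
  part : Fin k → Finset N
  cent : Fin k → M
  partition : ∀ i : N, ∃! t : Fin k, i ∈ part t

/-- The (unique) index of the cluster containing agent `i`. -/
noncomputable def Clustering.idx {N M : Type*} {k : ℕ} (X : Clustering N M k) (i : N) :
    Fin k :=
  (X.partition i).exists.choose

/-- The loss of agent `i` under clustering `X`, for loss functions `l`. -/
noncomputable def Clustering.loss {N M : Type*} {k : ℕ} (X : Clustering N M k)
    (l : N → Finset N → M → ℝ) (i : N) : ℝ :=
  l i (X.part (X.idx i)) (X.cent (X.idx i))

/-- `X` is in the `α`-core: no group `S` with `|S| ≥ n/k` and center `y` such that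
`α·ℓ_i(S,y) < ℓ_i(X)` for every `i ∈ S`. -/
def InCore {N M : Type*} [Fintype N] {k : ℕ} (X : Clustering N M k)
    (l : N → Finset N → M → ℝ) (α : ℝ) : Prop :=
  ¬ ∃ (S : Finset N) (y : M), (Fintype.card N : ℝ) / (k : ℝ) ≤ (S.card : ℝ) ∧
      ∀ i ∈ S, α * l i S y < X.loss l i

/-- `X` is `α`-FJR: no group `S` with `|S| ≥ n/k` and center `y` such that
`α·ℓ_i(S,y) < min_{j∈S} ℓ_j(X)` for every `i ∈ S`. -/
def IsFJR {N M : Type*} [Fintype N] {k : ℕ} (X : Clustering N M k)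
    (l : N → Finset N → M → ℝ) (α : ℝ) : Prop :=
  ¬ ∃ (S : Finset N) (y : M), (Fintype.card N : ℝ) / (k : ℝ) ≤ (S.card : ℝ) ∧
      ∀ i ∈ S, ∀ j ∈ S, α * l i S y < X.loss l j

/-- The dual metric loss: `ℓ_i(C,x) = max_{j∈C} d^m(i,j) + d^c(i,x)`. -/
noncomputable def dualLoss {N M : Type*} (dm : N → N → NNReal)
    (dc : N ⊕ M → N ⊕ M → NNReal) (i : N) (C : Finset N) (x : M) : ℝ :=
  ((C.sup fun j => dm i j : NNReal) : ℝ) + ((dc (Sum.inl i) (Sum.inr x) : NNReal) : ℝ)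

def pbDist {X Y : Type*} [DecidableEq Y] (f : X → Y) (c : NNReal) (x y : X) : NNReal :=
  if f x = f y then 0 else c

lemma pbDist_pseudo {X Y : Type*} [DecidableEq Y] (f : X → Y) (c : NNReal) :
    IsPseudometric (pbDist f c) := by
  refine ⟨fun x => if_pos rfl, fun x y => ?_, fun x y z => ?_⟩
  · unfold pbDist; split_ifs with h1 h2 <;> simp_all [eq_comm]
  · unfold pbDist; split_ifs with h1 h2 h3 <;> first
      | exact zero_le _
      | simp_all

lemma Clustering.mem_part_idx {N M : Type*} {k : ℕ} (X : Clustering N M k) (i : N) :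
    i ∈ X.part (X.idx i) :=
  (X.partition i).exists.choose_spec

lemma Clustering.idx_eq {N M : Type*} {k : ℕ} (X : Clustering N M k) {i : N} {t : Fin k}
    (h : i ∈ X.part t) : X.idx i = t :=
  (X.partition i).unique (X.mem_part_idx i) h

/-- Balanced-clustering impossibility for the dual metric loss: for every `α ≥ 1`, there is
an instance in which `k` divides `n` and no balanced clustering (every cluster of size
exactly `n/k`) is in the `α`-core. -/
theorem balanced_core_impossible_dual (α : ℝ) (hα : 1 ≤ α) :
    ∃ (n m k : ℕ) (dm : Fin n → Fin n → NNReal)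
      (dc : Fin n ⊕ Fin m → Fin n ⊕ Fin m → NNReal),
      1 ≤ n ∧ 1 ≤ m ∧ 1 ≤ k ∧ k ∣ n ∧ IsPseudometric dm ∧ IsPseudometric dc ∧
      ∀ X : Clustering (Fin n) (Fin m) k,
        (∀ t : Fin k, (X.part t).card = n / k) → ¬ InCore X (dualLoss dm dc) α := by
  set D : NNReal := ⟨α + 1, by linarith⟩ with hD
  set dm : Fin 4 → Fin 4 → NNReal :=
    pbDist (fun i : Fin 4 => decide (i.val < 3)) D with hdm
  set dc : Fin 4 ⊕ Fin 3 → Fin 4 ⊕ Fin 3 → NNReal :=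
    pbDist (Sum.elim (fun i : Fin 4 => i.val) (fun j : Fin 3 => j.val)) 1 with hdc
  refine ⟨4, 3, 2, dm, dc, by norm_num, by norm_num, by norm_num, ⟨2, rfl⟩,
    pbDist_pseudo _ _, pbDist_pseudo _ _, ?_⟩
  intro X hbal hc
  apply hc
  -- the cluster of agent 3 (the far agent)
  set t : Fin 2 := X.idx (3 : Fin 4) with htdef
  have hq : (3 : Fin 4) ∈ X.part t := X.mem_part_idx 3
  -- partner i of agent 3
  have hex : ∃ p ∈ X.part t, p ≠ 3 := by
    by_contra h
    push_neg at h
    have hsub : X.part t ⊆ {3} := fun p hp => Finset.mem_singleton.mpr (h p hp)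
    have := Finset.card_le_card hsub
    rw [hbal t] at this
    simp at this
  obtain ⟨i, hi, hi3⟩ := hex
  have hilt : i.val < 3 := by
    have : i.val ≠ 3 := fun h => hi3 (Fin.ext h)
    omega
  -- the other cluster
  set s : Fin 2 := ⟨1 - t.val, by omega⟩ with hsdef
  have hst : s ≠ t := by
    apply Fin.ne_of_val_ne
    have := t.isLt
    simp only [hsdef]
    omega
  -- an agent of the other cluster whose center doesn't match
  have hex2 : ∃ p ∈ X.part s, p.val ≠ (X.cent s).val := by
    obtain ⟨a, ha, b, hb, hab⟩ := Finset.one_lt_card.mp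
      (show 1 < (X.part s).card by rw [hbal s]; norm_num)
    rcases eq_or_ne a.val (X.cent s).val with h | h
    · exact ⟨b, hb, fun hb' => hab (Fin.ext (by omega))⟩
    · exact ⟨a, ha, h⟩
  obtain ⟨pk, hpk, hpkc⟩ := hex2
  have hpk3 : pk ≠ 3 := by
    intro h
    rw [h] at hpk
    exact hst ((X.partition 3).unique (X.idx_eq hpk ▸ X.mem_part_idx 3) hq)
  have hpk3' : pk ≠ 3 := hpk3
  have hpklt : pk.val < 3 := by
    have : pk.val ≠ 3 := fun h => hpk3 (Fin.ext h)
    omega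
  have hipk : i ≠ pk := by
    intro h
    rw [h] at hi
    exact hst ((X.partition pk).unique hpk hi)
  -- indices
  have hidxi : X.idx i = t := X.idx_eq hi
  have hidxpk : X.idx pk = s := X.idx_eq hpk
  -- blocking coalition
  set y : Fin 3 := ⟨pk.val, hpklt⟩ with hydef
  refine ⟨{i, pk}, y, ?_, ?_⟩
  · rw [Finset.card_pair hipk]
    simp
    norm_num
  · -- dm within {i, pk} is 0
    have hsup : ∀ j ∈ ({i, pk} : Finset (Fin 4)), ∀ j' ∈ ({i, pk} : Finset (Fin 4)),
        dm j j' = 0 := by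
      intro j hj j' hj'
      have hjlt : j.val < 3 := by
        rcases Finset.mem_insert.mp hj with h | h
        · rw [h]; exact hilt
        · rw [Finset.mem_singleton.mp h]; exact hpklt
      have hj'lt : j'.val < 3 := by
        rcases Finset.mem_insert.mp hj' with h | h
        · rw [h]; exact hilt
        · rw [Finset.mem_singleton.mp h]; exact hpklt
      simp [hdm, pbDist, hjlt, hj'lt]
    intro j hj
    have hsupz : (({i, pk} : Finset (Fin 4)).sup fun j' => dm j j') = 0 := by
      apply le_antisymm _ zero_le
      exact Finset.sup_le fun j' hj' => le_of_eq (hsup j hj j' hj')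
    rcases Finset.mem_insert.mp hj with hje | hje
    · -- j = i : current loss ≥ D = α + 1, deviation loss = 1
      subst hje
      have hdcy : dc (Sum.inl j) (Sum.inr y) = 1 := by
        have : j.val ≠ pk.val := fun h => hipk (Fin.ext h)
        simp [hdc, pbDist, hydef, this]
      have hloss : dualLoss dm dc j {j, pk} y = 1 := by
        rw [dualLoss, hsupz, hdcy]
        norm_num
      rw [hloss, mul_one]
      -- lower bound current loss
      have hsup2 : D ≤ (X.part (X.idx j)).sup fun j' => dm j j' := by
        rw [hidxi]
        refine le_trans (le_of_eq ?_) (Finset.le_sup hq)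
        simp only [hdm, pbDist]
        rw [if_neg]
        simp [hilt]
      have h2 : (D : ℝ) ≤ X.loss (dualLoss dm dc) j := by
        rw [Clustering.loss, dualLoss]
        have := NNReal.coe_le_coe.mpr hsup2
        have h0 : (0:ℝ) ≤ (dc (Sum.inl j) (Sum.inr (X.cent (X.idx j))) : ℝ) :=
          NNReal.coe_nonneg _
        linarith
      have : (D : ℝ) = α + 1 := rfl
      linarith
    · -- j = pk : current loss ≥ 1, deviation loss = 0
      rw [Finset.mem_singleton.mp hje]
      have hdcy : dc (Sum.inl pk) (Sum.inr y) = 0 := by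
        simp [hdc, pbDist, hydef]
      have hsupz' : (({i, pk} : Finset (Fin 4)).sup fun j' => dm pk j') = 0 := by
        apply le_antisymm _ zero_le
        exact Finset.sup_le fun j' hj' =>
          le_of_eq (hsup pk (Finset.mem_insert.mpr (Or.inr (Finset.mem_singleton_self pk))) j' hj')
      have hloss : dualLoss dm dc pk {i, pk} y = 0 := by
        rw [dualLoss, hsupz', hdcy]
        norm_num
      rw [hloss, mul_zero]
      -- current loss ≥ 1
      have hdcc : dc (Sum.inl pk) (Sum.inr (X.cent (X.idx pk))) = 1 := by
        rw [hidxpk]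
        simp [hdc, pbDist, hpkc]
      rw [Clustering.loss, dualLoss, hdcc]
      have h0 : (0:ℝ) ≤ ((X.part (X.idx pk)).sup fun j' => dm pk j' : NNReal) :=
        NNReal.coe_nonneg _
      norm_num
      linarith
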